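/- arXiv:0904.2795 — 2 statements merged into one kernel-verified Lean document; each statement's English description precedes it below -/
import Mathlib

section
/- For any Y ∈ M_{m,n}(ℝ): Y is very well approximable (VWA) if and only if the trajectory g_ℛ Λ_Y has linear growth, where ℛ is the central ray {(t/m,…,t/m, t/n,…,t/n) : t > 0} in 𝒜. -/
open MeasureTheory Metric Set

noncomputable section

namespace Paper

instance matrixMeasurableSpace {m n : Type*} : MeasurableSpace (Matrix m n ℝ) :=
  (MeasurableSpace.pi : MeasurableSpace (m → n → ℝ))

/-- The support of a measure on a metric space: points all of whose balls have
positive measure. -/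
def msupport {X : Type*} [PseudoMetricSpace X] [MeasurableSpace X] (ν : Measure X) : Set X :=
  {x | ∀ r : ℝ, 0 < r → 0 < ν (ball x r)}

/-- `‖f‖_{ν,B}`, the supremum of `|f|` over `B ∩ supp ν`. -/
def supOn {X : Type*} [PseudoMetricSpace X] [MeasurableSpace X] (ν : Measure X) (B : Set X)
    (f : X → ℝ) : ℝ :=
  sSup ((fun x => |f x|) '' (B ∩ msupport ν))

/-- `f` is `(C,α)`-good on `U` with respect to `ν`. -/
def CAlphaGoodOn {X : Type*} [PseudoMetricSpace X] [MeasurableSpace X] (C α : ℝ) (f : X → ℝ)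
    (ν : Measure X) (U : Set X) : Prop :=
  ∀ x ∈ msupport ν, ∀ r : ℝ, 0 < r → ball x r ⊆ U → ∀ ε : ℝ, 0 < ε →
    ν {y ∈ ball x r | |f y| < ε} ≤
      ENNReal.ofReal (C * (ε / supOn ν (ball x r) f) ^ α) * ν (ball x r)

/-- The pair `(f, ν)` is good (relative to the open set `U`): for `ν`-a.e. `x ∈ U`
there are a neighborhood `V` of `x` and `C, α > 0` such that every affine combination
of `1, f₁, …, f_N` is `(C,α)`-good on `V` with respect to `ν`. -/
def GoodPairOn {X : Type*} [PseudoMetricSpace X] [MeasurableSpace X] {ι : Type*} [Fintype ι]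
    (f : X → ι → ℝ) (ν : Measure X) (U : Set X) : Prop :=
  ∀ᵐ x ∂ν, x ∈ U → ∃ V, IsOpen V ∧ x ∈ V ∧ ∃ C : ℝ, 0 < C ∧ ∃ α : ℝ, 0 < α ∧
    ∀ (a : ℝ) (b : ι → ℝ), CAlphaGoodOn C α (fun y => a + ∑ i, b i * f y i) ν V

/-- The pair `(f, ν)` is nonplanar (relative to the open set `U`): on every ball
`B ⊆ U` of positive measure, the restrictions of `1, f₁, …, f_N` to `B ∩ supp ν`
are linearly independent over `ℝ`. -/
def NonplanarPairOn {X : Type*} [PseudoMetricSpace X] [MeasurableSpace X] {ι : Type*} [Fintype ι]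
    (f : X → ι → ℝ) (ν : Measure X) (U : Set X) : Prop :=
  ∀ (x : X) (r : ℝ), 0 < r → ball x r ⊆ U → 0 < ν (ball x r) →
    ∀ (a : ℝ) (b : ι → ℝ), ¬(a = 0 ∧ b = 0) →
      ∃ y ∈ ball x r ∩ msupport ν, a + ∑ i, b i * f y i ≠ 0

/-- `ν` is `D`-Federer on `U`. -/
def IsFedererOn {X : Type*} [PseudoMetricSpace X] [MeasurableSpace X] (ν : Measure X) (D : ℝ)
    (U : Set X) : Prop :=
  ∀ x ∈ msupport ν, ∀ r : ℝ, 0 < r → ball x r ⊆ U →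
    ν (ball x r) < ENNReal.ofReal D * ν (ball x (r / 3))

/-- `ν` is Federer: `ν`-a.e. point has a neighborhood on which `ν` is `D`-Federer
for some `D > 0`. -/
def IsFederer {X : Type*} [PseudoMetricSpace X] [MeasurableSpace X] (ν : Measure X) : Prop :=
  ∀ᵐ x ∂ν, ∃ U, IsOpen U ∧ x ∈ U ∧ ∃ D : ℝ, 0 < D ∧ IsFedererOn ν D U

/-- Coordinatewise cast of an integer vector to a real vector. -/
def intCast {ι : Type*} (q : ι → ℤ) : ι → ℝ := fun i => (q i : ℝ)

/-- `Π(x) = ∏ᵢ |xᵢ|`. -/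
def mprod {ι : Type*} [Fintype ι] (x : ι → ℝ) : ℝ := ∏ i, |x i|

/-- `Π₊(x) = ∏ᵢ max (|xᵢ|) 1`. -/
def mprodPlus {ι : Type*} [Fintype ι] (x : ι → ℝ) : ℝ := ∏ i, max |x i| 1

/-- `Y` is very well multiplicatively approximable. -/
def IsVWMA {m n : ℕ} (Y : Matrix (Fin m) (Fin n) ℝ) : Prop :=
  ∃ δ : ℝ, 0 < δ ∧
    {q : Fin n → ℤ | ∃ p : Fin m → ℤ,
      mprod (Y.mulVec (intCast q) - intCast p) < mprodPlus (intCast q) ^ (-(1 + δ))}.Infinite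

/-- `Y` is very well approximable (`‖·‖` is the max norm). -/
def IsVWA {m n : ℕ} (Y : Matrix (Fin m) (Fin n) ℝ) : Prop :=
  ∃ δ : ℝ, 0 < δ ∧
    {q : Fin n → ℤ | ∃ p : Fin m → ℤ,
      ‖Y.mulVec (intCast q) - intCast p‖ < ‖intCast q‖ ^ (-(n / m : ℝ) - δ)}.Infinite

/-- A measure on `M_{m,n}(ℝ)` is strongly extremal if a.e. matrix is not VWMA. -/
def StronglyExtremal {m n : ℕ} (μ : Measure (Matrix (Fin m) (Fin n) ℝ)) : Prop :=
  ∀ᵐ Y ∂μ, ¬ IsVWMA Y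

/-- A measure on `M_{m,n}(ℝ)` is extremal if a.e. matrix is not VWA. -/
def Extremal {m n : ℕ} (μ : Measure (Matrix (Fin m) (Fin n) ℝ)) : Prop :=
  ∀ᵐ Y ∂μ, ¬ IsVWA Y

/-- The index set of the minors map: pairs of subsets `I ⊆ {1,…,m}`, `J ⊆ {1,…,n}`
with `|I| = |J| > 0`.  It has `C(m+n, m) - 1` elements. -/
abbrev MinorIdx (m n : ℕ) :=
  {p : Finset (Fin m) × Finset (Fin n) // p.1.card = p.2.card ∧ 0 < p.1.card}

/-- The minor `y_{I,J}` of `Y` on rows `I` and columns `J`. -/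
def minor {m n : ℕ} (Y : Matrix (Fin m) (Fin n) ℝ) (I : Finset (Fin m)) (J : Finset (Fin n))
    (h : I.card = J.card) : ℝ :=
  Matrix.det (Matrix.of fun a b : Fin I.card =>
    Y ((I.orderIsoOfFin rfl a : Fin m)) ((J.orderIsoOfFin h.symm b : Fin n)))

/-- The minors map `𝐝 : M_{m,n}(ℝ) → ℝ^N`, sending `Y` to the vector of all its minors. -/
def minorsMap {m n : ℕ} (Y : Matrix (Fin m) (Fin n) ℝ) : MinorIdx m n → ℝ :=
  fun p => minor Y p.1.1 p.1.2 p.2.1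

/-- `f` is `ℓ`-nondegenerate at `x`: the partial derivatives of `f` (taken inside `U`)
at `x` of orders `1, …, ℓ` span the target space. -/
def NondegenerateAtOrder {d : ℕ} {ι : Type*} [Fintype ι] (f : (Fin d → ℝ) → (ι → ℝ))
    (U : Set (Fin d → ℝ)) (ℓ : ℕ) (x : Fin d → ℝ) : Prop :=
  Submodule.span ℝ {y : ι → ℝ | ∃ j : ℕ, 1 ≤ j ∧ j ≤ ℓ ∧ ∃ e : Fin j → Fin d,
    y = iteratedFDerivWithin ℝ j f U x (fun a => Pi.single (e a) 1)} = ⊤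

/-- `f` is nondegenerate: for Lebesgue-a.e. `x ∈ U`, `f` is `ℓ`-nondegenerate at `x`
for some `ℓ`. -/
def IsNondegenerate {d : ℕ} {ι : Type*} [Fintype ι] (f : (Fin d → ℝ) → (ι → ℝ))
    (U : Set (Fin d → ℝ)) : Prop :=
  ∀ᵐ x ∂(volume.restrict U), ∃ ℓ : ℕ, NondegenerateAtOrder f U ℓ x

/-- The set `𝒜` of admissible parameters. -/
def calA (m n : ℕ) : Set (Fin (m + n) → ℝ) :=
  {t | (∀ i, 0 < t i) ∧
    ∑ i : Fin m, t (Fin.castAdd n i) = ∑ j : Fin n, t (Fin.natAdd m j)}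

/-- `⌞t⌟ = ∑_{i=1}^m tᵢ`. -/
def height (m n : ℕ) (t : Fin (m + n) → ℝ) : ℝ := ∑ i : Fin m, t (Fin.castAdd n i)

/-- The diagonal matrix `g_t = diag(e^{t₁},…,e^{t_m}, e^{−t_{m+1}},…,e^{−t_{m+n}})`. -/
def gMat (m n : ℕ) (t : Fin (m + n) → ℝ) : Matrix (Fin (m + n)) (Fin (m + n)) ℝ :=
  Matrix.diagonal fun i => if (i : ℕ) < m then Real.exp (t i) else Real.exp (-t i)

/-- The unipotent matrix `u_Y = [[I_m, Y], [0, I_n]]`. -/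
def uMat {m n : ℕ} (Y : Matrix (Fin m) (Fin n) ℝ) : Matrix (Fin (m + n)) (Fin (m + n)) ℝ :=
  Matrix.reindex finSumFinEquiv finSumFinEquiv (Matrix.fromBlocks 1 Y 0 1)

/-- The lattice `g ℤ^k` in `ℝ^k`. -/
def latticeOf {k : ℕ} (g : Matrix (Fin k) (Fin k) ℝ) : Set (Fin k → ℝ) :=
  {v | ∃ q : Fin k → ℤ, v = g.mulVec (intCast q)}

/-- The Euclidean norm on `ℝ^k`. -/
def eucNorm {k : ℕ} (v : Fin k → ℝ) : ℝ := Real.sqrt (∑ i, v i ^ 2)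

/-- Membership in `K_ε` (max-norm version): every nonzero lattice vector has
max norm at least `ε`. -/
def inKmax {k : ℕ} (ε : ℝ) (Λ : Set (Fin k → ℝ)) : Prop :=
  ∀ v ∈ Λ, v ≠ 0 → ε ≤ ‖v‖

/-- Membership in `K_ε` (Euclidean version). -/
def inKeuc {k : ℕ} (ε : ℝ) (Λ : Set (Fin k → ℝ)) : Prop :=
  ∀ v ∈ Λ, v ≠ 0 → ε ≤ eucNorm v

/-- `g_𝒯 (gℤ^k)` has linear growth (max-norm version of `K_ε`). -/
def HasLinearGrowthMax (m n : ℕ) (𝒯 : Set (Fin (m + n) → ℝ))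
    (g : Matrix (Fin (m + n)) (Fin (m + n)) ℝ) : Prop :=
  ∃ γ : ℝ, 0 < γ ∧ ¬ Bornology.IsBounded
    {t ∈ 𝒯 | ¬ inKmax (Real.exp (-(γ * height m n t))) (latticeOf (gMat m n t * g))}

/-- `g_𝒯 (gℤ^k)` has linear growth (Euclidean version of `K_ε`). -/
def HasLinearGrowthEuc (m n : ℕ) (𝒯 : Set (Fin (m + n) → ℝ))
    (g : Matrix (Fin (m + n)) (Fin (m + n)) ℝ) : Prop :=
  ∃ γ : ℝ, 0 < γ ∧ ¬ Bornology.IsBounded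
    {t ∈ 𝒯 | ¬ inKeuc (Real.exp (-(γ * height m n t))) (latticeOf (gMat m n t * g))}

/-- The central ray `ℛ = {(t/m,…,t/m, t/n,…,t/n) : t > 0}`. -/
def centralRay (m n : ℕ) : Set (Fin (m + n) → ℝ) :=
  {t | ∃ s : ℝ, 0 < s ∧ t = fun i : Fin (m + n) => if (i : ℕ) < m then s / m else s / n}

/-- The coordinate of the wedge `v₁ ∧ ⋯ ∧ v_ℓ` at the basis element `e_S` of
`⋀^ℓ(ℝ^k)` (`S ⊆ {1,…,k}` with `|S| = ℓ`, written in increasing order); `0` if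
`|S| ≠ ℓ`. -/
def wedgeCoord {k ℓ : ℕ} (v : Fin ℓ → (Fin k → ℝ)) (S : Finset (Fin k)) : ℝ :=
  if h : S.card = ℓ then
    Matrix.det (Matrix.of fun a b : Fin ℓ => v b ((S.orderIsoOfFin h a : Fin k)))
  else 0

/-- The Euclidean norm of the wedge `v₁ ∧ ⋯ ∧ v_ℓ` in `⋀^ℓ(ℝ^k)`. -/
def wedgeNorm {k ℓ : ℕ} (v : Fin ℓ → (Fin k → ℝ)) : ℝ :=
  Real.sqrt (∑ S : Finset (Fin k), wedgeCoord v S ^ 2)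

/-- `v₁, …, v_ℓ ∈ ℤ^k` form a primitive tuple: they can be completed to a basis
of `ℤ^k`.  These represent the elements of `𝒲_ℓ`. -/
def IsPrimitive {k ℓ : ℕ} (v : Fin ℓ → (Fin k → ℤ)) : Prop :=
  ∃ (b : Module.Basis (Fin k) ℤ (Fin k → ℤ)) (e : Fin ℓ ↪ Fin k), ∀ i, b (e i) = v i

/-- The action of a matrix `g` on (the tuple representing) a wedge of integer vectors. -/
def actTuple {k ℓ : ℕ} (g : Matrix (Fin k) (Fin k) ℝ) (v : Fin ℓ → (Fin k → ℤ)) :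
    Fin ℓ → (Fin k → ℝ) :=
  fun i => g.mulVec (intCast (v i))

/-- Membership of `gℤ^k` in `K̃_ε`: `‖g w‖ ≥ ε` for all `w ∈ 𝒲`. -/
def inKwedge {k : ℕ} (ε : ℝ) (g : Matrix (Fin k) (Fin k) ℝ) : Prop :=
  ∀ ℓ : ℕ, 1 ≤ ℓ → ℓ ≤ k → ∀ v : Fin ℓ → (Fin k → ℤ), IsPrimitive v →
    ε ≤ wedgeNorm (actTuple g v)

open Classical in
/-- The Euclidean norm of the orthogonal projection `π⁺_t` of a wedge onto `E⁺_t`,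
the span of the basis elements `e_I ∧ v_J` (i.e. `e_S`) with
`∑_{i∈I} tᵢ ≥ ∑_{j∈J} t_{m+j}`. -/
def projPlusNorm (m n : ℕ) {ℓ : ℕ} (t : Fin (m + n) → ℝ) (v : Fin ℓ → (Fin (m + n) → ℝ)) : ℝ :=
  Real.sqrt (∑ S : Finset (Fin (m + n)),
    if (∑ j ∈ S.filter (fun j : Fin (m + n) => ¬ ((j : ℕ) < m)), t j) ≤
        (∑ i ∈ S.filter (fun i : Fin (m + n) => (i : ℕ) < m), t i)
    then wedgeCoord v S ^ 2 else 0)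

/-- `ν` is absolutely decaying. -/
def AbsolutelyDecaying {d : ℕ} (ν : Measure (Fin d → ℝ)) : Prop :=
  ∀ᵐ x ∂ν, ∃ V, IsOpen V ∧ x ∈ V ∧ ∃ C : ℝ, 0 < C ∧ ∃ α : ℝ, 0 < α ∧
    ∀ y ∈ msupport ν, ∀ r : ℝ, 0 < r → ball y r ⊆ V →
      ∀ (u : Fin d → ℝ) (c : ℝ), (∑ i, u i ^ 2) = 1 → ∀ ε : ℝ, 0 < ε →
        ν {z ∈ ball y r | |(∑ i, u i * z i) - c| < ε} ≤
          ENNReal.ofReal (C * (ε / r) ^ α) * ν (ball y r)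

/-- `ν` is absolutely friendly: Federer and absolutely decaying. -/
def AbsolutelyFriendly {d : ℕ} (ν : Measure (Fin d → ℝ)) : Prop :=
  IsFederer ν ∧ AbsolutelyDecaying ν

/-- `(F, ν)` is row-nonplanar: for every ball `B ⊆ U` of positive measure and every
nonzero `v ∈ ℝ^n`, the map `x ↦ F(x)v` is nonconstant on `B ∩ supp ν`. -/
def RowNonplanar {X : Type*} [PseudoMetricSpace X] [MeasurableSpace X] {m n : ℕ}
    (F : X → Matrix (Fin m) (Fin n) ℝ) (ν : Measure X) (U : Set X) : Prop :=
  ∀ (x : X) (r : ℝ), 0 < r → ball x r ⊆ U → 0 < ν (ball x r) →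
    ∀ v : Fin n → ℝ, v ≠ 0 →
      ∃ y ∈ ball x r ∩ msupport ν, ∃ z ∈ ball x r ∩ msupport ν,
        (F y).mulVec v ≠ (F z).mulVec v

section Statement3Aux

variable {m n : ℕ}

/-- The point on the central ray with parameter `s`. -/
def tfun (m n : ℕ) (s : ℝ) : Fin (m + n) → ℝ :=
  fun i : Fin (m + n) => if (i : ℕ) < m then s / m else s / n

lemma tfun_mem_centralRay {s : ℝ} (hs : 0 < s) : tfun m n s ∈ centralRay m n :=
  ⟨s, hs, rfl⟩

lemma height_tfun (hm : 0 < m) (s : ℝ) : height m n (tfun m n s) = s := by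
  have hm' : (m : ℝ) ≠ 0 := Nat.cast_ne_zero.mpr hm.ne'
  unfold height tfun
  simp only [Fin.coe_castAdd, Fin.is_lt, if_true]
  rw [Finset.sum_const, Finset.card_univ, Fintype.card_fin, nsmul_eq_mul,
    mul_div_cancel₀ _ hm']

lemma norm_tfun_le (hm : 0 < m) (hn : 0 < n) {s : ℝ} (hs : 0 ≤ s) :
    ‖tfun m n s‖ ≤ s := by
  have hm1 : (1 : ℝ) ≤ m := by exact_mod_cast hm
  have hn1 : (1 : ℝ) ≤ n := by exact_mod_cast hn
  rw [pi_norm_le_iff_of_nonneg hs]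
  intro i
  rw [Real.norm_eq_abs]
  unfold tfun
  split_ifs
  · rw [abs_of_nonneg (by positivity)]
    exact div_le_self hs hm1
  · rw [abs_of_nonneg (by positivity)]
    exact div_le_self hs hn1

lemma le_norm_tfun (hm : 0 < m) {s : ℝ} : s / m ≤ ‖tfun m n s‖ := by
  have h := norm_le_pi_norm (tfun m n s) (Fin.castAdd n ⟨0, hm⟩)
  have h2 : tfun m n s (Fin.castAdd n ⟨0, hm⟩) = s / m := by
    unfold tfun
    simp [hm]
  rw [h2, Real.norm_eq_abs] at h
  exact le_trans (le_abs_self _) h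

lemma intCast_eq_zero_iff {d : ℕ} {q : Fin d → ℤ} : intCast q = 0 ↔ q = 0 := by
  constructor
  · intro h
    funext j
    have := congrFun h j
    simpa [intCast] using this
  · rintro rfl
    funext j
    simp [intCast]

lemma abs_component_le_norm {d : ℕ} (x : Fin d → ℝ) (i : Fin d) : |x i| ≤ ‖x‖ := by
  simpa [Real.norm_eq_abs] using norm_le_pi_norm x i

lemma one_le_norm_intCast {d : ℕ} {q : Fin d → ℤ} (hq : q ≠ 0) : 1 ≤ ‖intCast q‖ := by
  obtain ⟨j, hj⟩ : ∃ j, q j ≠ 0 := by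
    by_contra h
    push_neg at h
    exact hq (funext h)
  have h1 : (1 : ℝ) ≤ |(q j : ℝ)| := by
    rw [← Int.cast_abs]
    exact_mod_cast Int.one_le_abs hj
  exact le_trans h1 (abs_component_le_norm (intCast q) j)

lemma finite_le_norm {d : ℕ} (C : ℝ) : {q : Fin d → ℤ | ‖intCast q‖ ≤ C}.Finite := by
  apply Set.Finite.subset (Set.finite_Icc (fun _ : Fin d => -⌈C⌉) fun _ => ⌈C⌉)
  intro q hq
  simp only [Set.mem_setOf_eq] at hq
  have key : ∀ i, -⌈C⌉ ≤ q i ∧ q i ≤ ⌈C⌉ := by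
    intro i
    have h1 : |(q i : ℝ)| ≤ C := le_trans (abs_component_le_norm (intCast q) i) hq
    have h2 : ((|q i| : ℤ) : ℝ) ≤ (⌈C⌉ : ℝ) := by
      rw [Int.cast_abs]
      exact le_trans h1 (Int.le_ceil C)
    have h3 : |q i| ≤ ⌈C⌉ := by exact_mod_cast h2
    exact abs_le.mp h3
  exact Set.mem_Icc.mpr ⟨fun i => (key i).1, fun i => (key i).2⟩

lemma exists_mem_norm_gt {d : ℕ} {S : Set (Fin d → ℤ)} (hS : S.Infinite) (C : ℝ) :
    ∃ q ∈ S, C < ‖intCast q‖ := by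
  by_contra h
  push_neg at h
  exact hS (Set.Finite.subset (finite_le_norm C) h)

lemma exists_norm_gt_of_not_isBounded {E : Type*} [SeminormedAddGroup E] {S : Set E}
    (h : ¬ Bornology.IsBounded S) (C : ℝ) : ∃ x ∈ S, C < ‖x‖ := by
  by_contra hc
  push_neg at hc
  exact h (isBounded_iff_forall_norm_le.mpr ⟨C, hc⟩)

lemma uMat_mulVec (Y : Matrix (Fin m) (Fin n) ℝ) (z : Fin (m + n) → ℝ) :
    (uMat Y).mulVec z = fun i => Sum.elim
      (fun i' : Fin m => z (Fin.castAdd n i') + Y.mulVec (fun j => z (Fin.natAdd m j)) i')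
      (fun j : Fin n => z (Fin.natAdd m j)) (finSumFinEquiv.symm i) := by
  unfold uMat
  rw [Matrix.reindex_apply, Matrix.submatrix_mulVec_equiv, Equiv.symm_symm]
  have hz : (z ∘ finSumFinEquiv) = Sum.elim (fun i' : Fin m => z (Fin.castAdd n i'))
      (fun j : Fin n => z (Fin.natAdd m j)) := by
    funext x
    cases x with
    | inl i => simp
    | inr j => simp
  rw [hz, Matrix.fromBlocks_mulVec]
  funext i
  rcases hsi : finSumFinEquiv.symm i with a | b <;>
    simp [hsi, Matrix.one_mulVec, Matrix.zero_mulVec]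

lemma coord_left (Y : Matrix (Fin m) (Fin n) ℝ) (s : ℝ) (z : Fin (m + n) → ℤ) (i : Fin m) :
    ((gMat m n (tfun m n s) * uMat Y).mulVec (intCast z)) (Fin.castAdd n i)
      = Real.exp (s / m) * ((z (Fin.castAdd n i) : ℝ)
          + Y.mulVec (fun j => (z (Fin.natAdd m j) : ℝ)) i) := by
  rw [← Matrix.mulVec_mulVec]
  unfold gMat
  rw [Matrix.mulVec_diagonal, uMat_mulVec]
  have h1 : ((Fin.castAdd n i : Fin (m + n)) : ℕ) < m := by simp [Fin.is_lt]
  have h2 : tfun m n s (Fin.castAdd n i) = s / m := by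
    unfold tfun
    simp [h1]
  simp [h1, h2, intCast]

lemma coord_right (Y : Matrix (Fin m) (Fin n) ℝ) (s : ℝ) (z : Fin (m + n) → ℤ) (j : Fin n) :
    ((gMat m n (tfun m n s) * uMat Y).mulVec (intCast z)) (Fin.natAdd m j)
      = Real.exp (-(s / n)) * (z (Fin.natAdd m j) : ℝ) := by
  rw [← Matrix.mulVec_mulVec]
  unfold gMat
  rw [Matrix.mulVec_diagonal, uMat_mulVec]
  have h1 : ¬ ((Fin.natAdd m j : Fin (m + n)) : ℕ) < m := by
    simp [Fin.coe_natAdd]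
  have h2 : tfun m n s (Fin.natAdd m j) = s / n := by
    unfold tfun
    simp [h1]
  simp [h1, h2, intCast]

end Statement3Aux

lemma aux_abs_exp_lt {c x ε : ℝ} (h : Real.exp c * |x| < ε) : |x| < Real.exp (-c) * ε := by
  have h1 : Real.exp (-c) * (Real.exp c * |x|) = |x| := by
    rw [← mul_assoc, ← Real.exp_add]
    simp
  calc |x| = Real.exp (-c) * (Real.exp c * |x|) := h1.symm
    _ < Real.exp (-c) * ε := by
        exact mul_lt_mul_of_pos_left h (Real.exp_pos _)

lemma not_inKmax_iff {m n : ℕ} (hm : 0 < m) (hn : 0 < n) (Y : Matrix (Fin m) (Fin n) ℝ)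
    {γ s : ℝ} (hγ : 0 < γ) (hs : 0 < s) :
    (¬ inKmax (Real.exp (-(γ * s))) (latticeOf (gMat m n (tfun m n s) * uMat Y))) ↔
    ∃ (q : Fin n → ℤ) (p : Fin m → ℤ), q ≠ 0 ∧
      ‖Y.mulVec (intCast q) - intCast p‖ < Real.exp (-(γ * s) - s / m) ∧
      ‖intCast q‖ < Real.exp (-(γ * s) + s / n) := by
  have hεpos : (0 : ℝ) < Real.exp (-(γ * s)) := Real.exp_pos _
  have hεlt1 : Real.exp (-(γ * s)) < 1 := by
    rw [Real.exp_lt_one_iff]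
    nlinarith
  unfold inKmax
  push_neg
  constructor
  · rintro ⟨v, ⟨z, rfl⟩, hv0, hvlt⟩
    set M := gMat m n (tfun m n s) * uMat Y with hM
    refine ⟨fun j => z (Fin.natAdd m j), fun i => -z (Fin.castAdd n i), ?_, ?_, ?_⟩
    · -- q ≠ 0
      intro hq0
      obtain ⟨idx, hidx⟩ := Function.ne_iff.mp hv0
      have hqz : ∀ j : Fin n, z (Fin.natAdd m j) = 0 := fun j => congrFun hq0 j
      induction idx using Fin.addCases with
      | left i =>
        have hc := coord_left Y s z i
        have hYq : Y.mulVec (fun j => (z (Fin.natAdd m j) : ℝ)) = 0 := by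
          have : (fun j => (z (Fin.natAdd m j) : ℝ)) = (0 : Fin n → ℝ) := by
            funext j; simp [hqz j]
          rw [this, Matrix.mulVec_zero]
        rw [hYq] at hc
        simp only [Pi.zero_apply, add_zero] at hc
        have hzne : z (Fin.castAdd n i) ≠ 0 := by
          intro h0
          apply hidx
          rw [hc, h0]
          simp
        have h1 : (1 : ℝ) ≤ |(z (Fin.castAdd n i) : ℝ)| := by
          rw [← Int.cast_abs]
          exact_mod_cast Int.one_le_abs hzne
        have h2 : |M.mulVec (intCast z) (Fin.castAdd n i)| ≤ ‖M.mulVec (intCast z)‖ :=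
          abs_component_le_norm _ _
        have h3 : (1 : ℝ) ≤ |M.mulVec (intCast z) (Fin.castAdd n i)| := by
          rw [hc, abs_mul, Real.abs_exp]
          have he : (1 : ℝ) ≤ Real.exp (s / m) := by
            rw [Real.one_le_exp_iff]
            positivity
          nlinarith
        linarith
      | right j =>
        apply hidx
        rw [coord_right Y s z j, hqz j]
        simp
    · -- ‖Yq - p‖ < exp(-(γs) - s/m)
      have hexp : Real.exp (-(γ * s) - s / m)
          = Real.exp (-(s / m)) * Real.exp (-(γ * s)) := by
        rw [← Real.exp_add]; ring_nf
      rw [pi_norm_lt_iff (Real.exp_pos _)]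
      intro i
      have hc := coord_left Y s z i
      have hcomp : (Y.mulVec (intCast (fun j => z (Fin.natAdd m j)))
          - intCast (fun i' => -z (Fin.castAdd n i'))) i
          = (z (Fin.castAdd n i) : ℝ)
            + Y.mulVec (fun j => (z (Fin.natAdd m j) : ℝ)) i := by
        have hiq : (intCast fun j => z (Fin.natAdd m j))
            = fun j => ((z (Fin.natAdd m j) : ℤ) : ℝ) := rfl
        rw [hiq]
        simp [intCast]
        ring
      rw [Real.norm_eq_abs, hcomp, hexp]
      apply aux_abs_exp_lt
      rw [← abs_of_pos (Real.exp_pos (s / m)), ← abs_mul, ← hc]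
      · exact lt_of_le_of_lt (abs_component_le_norm _ _) hvlt
    · -- ‖q‖ < exp(-(γs) + s/n)
      have hexp : Real.exp (-(γ * s) + s / n)
          = Real.exp (-(-(s / n))) * Real.exp (-(γ * s)) := by
        rw [← Real.exp_add]; ring_nf
      rw [pi_norm_lt_iff (Real.exp_pos _)]
      intro j
      have hc := coord_right Y s z j
      rw [Real.norm_eq_abs, hexp]
      show |(((fun j => z (Fin.natAdd m j)) j : ℤ) : ℝ)| < _
      apply aux_abs_exp_lt
      rw [← abs_of_pos (Real.exp_pos (-(s / n))), ← abs_mul, ← hc]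
      exact lt_of_le_of_lt (abs_component_le_norm _ _) hvlt
  · rintro ⟨q, p, hq0, h1, h2⟩
    set z : Fin (m + n) → ℤ := Fin.addCases (fun i => -(p i)) q with hzdef
    have hzl : ∀ i : Fin m, z (Fin.castAdd n i) = -(p i) := fun i => by
      simp [hzdef]
    have hzr : ∀ j : Fin n, z (Fin.natAdd m j) = q j := fun j => by
      simp [hzdef]
    have hzq : (fun j => (z (Fin.natAdd m j) : ℝ)) = intCast q := by
      funext j; rw [hzr j]; rfl
    refine ⟨(gMat m n (tfun m n s) * uMat Y).mulVec (intCast z), ⟨z, rfl⟩, ?_, ?_⟩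
    · -- nonzero
      obtain ⟨j, hj⟩ : ∃ j, q j ≠ 0 := by
        by_contra h
        push_neg at h
        exact hq0 (funext h)
      apply Function.ne_iff.mpr
      refine ⟨Fin.natAdd m j, ?_⟩
      rw [coord_right Y s z j, hzr j]
      simp only [Pi.zero_apply]
      exact mul_ne_zero (Real.exp_ne_zero _) (by exact_mod_cast hj)
    · rw [pi_norm_lt_iff hεpos]
      intro idx
      induction idx using Fin.addCases with
      | left i =>
        rw [Real.norm_eq_abs, coord_left Y s z i, hzl i, hzq]
        have hcomp : -((p i : ℝ)) + Y.mulVec (intCast q) i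
            = (Y.mulVec (intCast q) - intCast p) i := by
          simp [intCast]
          ring
        rw [Int.cast_neg, hcomp, abs_mul, Real.abs_exp]
        have hle : |(Y.mulVec (intCast q) - intCast p) i| ≤ ‖Y.mulVec (intCast q) - intCast p‖ :=
          abs_component_le_norm _ _
        have hlt : |(Y.mulVec (intCast q) - intCast p) i| < Real.exp (-(γ * s) - s / m) :=
          lt_of_le_of_lt hle h1
        calc Real.exp (s / m) * |(Y.mulVec (intCast q) - intCast p) i|
            < Real.exp (s / m) * Real.exp (-(γ * s) - s / m) :=
              mul_lt_mul_of_pos_left hlt (Real.exp_pos _)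
          _ = Real.exp (-(γ * s)) := by rw [← Real.exp_add]; ring_nf
      | right j =>
        rw [Real.norm_eq_abs, coord_right Y s z j, hzr j, abs_mul, Real.abs_exp]
        have hle : |((q j : ℤ) : ℝ)| ≤ ‖intCast q‖ := abs_component_le_norm (intCast q) j
        have hlt : |((q j : ℤ) : ℝ)| < Real.exp (-(γ * s) + s / n) := lt_of_le_of_lt hle h2
        calc Real.exp (-(s / n)) * |((q j : ℤ) : ℝ)|
            < Real.exp (-(s / n)) * Real.exp (-(γ * s) + s / n) :=
              mul_lt_mul_of_pos_left hlt (Real.exp_pos _)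
          _ = Real.exp (-(γ * s)) := by rw [← Real.exp_add]; ring_nf

set_option maxHeartbeats 1000000 in
/-- `Y` is VWA iff `g_ℛ Λ_Y` has linear growth. -/
theorem statement3 (m n : ℕ) (hm : 0 < m) (hn : 0 < n)
    (Y : Matrix (Fin m) (Fin n) ℝ) :
    IsVWA Y ↔ HasLinearGrowthMax m n (centralRay m n) (uMat Y) := by
  have hm1 : (1 : ℝ) ≤ m := by exact_mod_cast hm
  have hn1 : (1 : ℝ) ≤ n := by exact_mod_cast hn
  have hmpos : (0 : ℝ) < m := by linarith
  have hnpos : (0 : ℝ) < n := by linarith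
  have h2n : 1 / (2 * (n : ℝ)) + 1 / (2 * n) = 1 / n := by
    rw [div_add_div _ _ (by positivity) (by positivity)]
    rw [div_eq_div_iff (by positivity) (by positivity)]
    ring
  have hmn : ((n : ℝ) / m) * (1 / n) = 1 / m := by
    field_simp
  constructor
  · rintro ⟨δ, hδ, hinf⟩
    obtain ⟨γ, hγdef⟩ : ∃ γ : ℝ, γ = min (δ / (2 * n * (1 + n / m + δ))) (1 / (2 * n)) :=
      ⟨_, rfl⟩
    have hγpos : 0 < γ := by rw [hγdef]; exact lt_min (by positivity) (by positivity)
    have hγle : γ ≤ 1 / (2 * n) := by rw [hγdef]; exact min_le_right _ _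
    have hγle2 : γ ≤ δ / (2 * n * (1 + n / m + δ)) := by rw [hγdef]; exact min_le_left _ _
    obtain ⟨b, hbdef⟩ : ∃ b : ℝ, b = 1 / n - γ := ⟨_, rfl⟩
    obtain ⟨a, hadef⟩ : ∃ a : ℝ, a = 1 / m + γ := ⟨_, rfl⟩
    obtain ⟨κ, hκdef⟩ : ∃ κ : ℝ, κ = δ / (2 * n) := ⟨_, rfl⟩
    have hb : 1 / (2 * (n : ℝ)) ≤ b := by rw [hbdef]; linarith
    have hbpos : 0 < b := lt_of_lt_of_le (by positivity) hb
    have hapos : 0 < a := by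
      have h0 : (0 : ℝ) < 1 / m := by positivity
      rw [hadef]; linarith
    have hκpos : 0 < κ := by rw [hκdef]; positivity
    have hdn : δ * (1 / (n : ℝ)) = 2 * (δ / (2 * n)) := by field_simp
    have e2 : γ * (1 + n / m + δ) ≤ δ / (2 * (n : ℝ)) := by
      have hpos : (0 : ℝ) < 1 + n / m + δ := by positivity
      calc γ * (1 + n / m + δ) ≤ (δ / (2 * n * (1 + n / m + δ))) * (1 + n / m + δ) :=
            mul_le_mul_of_nonneg_right hγle2 hpos.le
        _ = δ / (2 * (n : ℝ)) := by field_simp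
    have hkey : a + κ ≤ ((n : ℝ) / m + δ) * b := by
      rw [hadef, hbdef, hκdef]
      nlinarith [e2, hmn, hdn]
    refine ⟨γ, hγpos, ?_⟩
    intro hB
    obtain ⟨C, hC⟩ := isBounded_iff_forall_norm_le.mp hB
    obtain ⟨R, hRdef⟩ : ∃ R : ℝ, R = max C 0 := ⟨_, rfl⟩
    obtain ⟨q, hqS, hqnorm⟩ := exists_mem_norm_gt hinf
      (Real.exp (max (a / κ) (b * ((m : ℝ) * R))))
    have hqne : q ≠ 0 := by
      intro h0
      rw [h0, intCast_eq_zero_iff.mpr rfl, norm_zero] at hqnorm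
      linarith [Real.exp_pos (max (a / κ) (b * ((m : ℝ) * R)))]
    have hq1 : 1 ≤ ‖intCast q‖ := one_le_norm_intCast hqne
    have hqpos : 0 < ‖intCast q‖ := by linarith
    obtain ⟨L, hLdef⟩ : ∃ L : ℝ, L = Real.log ‖intCast q‖ := ⟨_, rfl⟩
    have hL : Real.exp L = ‖intCast q‖ := by rw [hLdef]; exact Real.exp_log hqpos
    have hLgt : max (a / κ) (b * ((m : ℝ) * R)) < L := by
      have h := Real.log_lt_log (Real.exp_pos _) hqnorm
      rw [Real.log_exp] at h
      rw [hLdef]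
      exact h
    have hL0 : a / κ ≤ L := le_of_lt (lt_of_le_of_lt (le_max_left _ _) hLgt)
    have hLR : b * ((m : ℝ) * R) < L := lt_of_le_of_lt (le_max_right _ _) hLgt
    have hLnonneg : 0 ≤ L := by rw [hLdef]; exact Real.log_nonneg hq1
    obtain ⟨s, hsdef⟩ : ∃ s : ℝ, s = (L + 1) / b := ⟨_, rfl⟩
    have hspos : 0 < s := by rw [hsdef]; exact div_pos (by linarith) hbpos
    have hbs : b * s = L + 1 := by
      rw [hsdef, mul_div_cancel₀ _ hbpos.ne']
    obtain ⟨p, hp⟩ := hqS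
    have hκL : a ≤ κ * L := by
      have h1 : κ * (a / κ) ≤ κ * L := mul_le_mul_of_nonneg_left hL0 hκpos.le
      have h2 : κ * (a / κ) = a := by
        rw [← mul_div_assoc, mul_div_cancel_left₀ _ hκpos.ne']
      linarith
    have has : a * s ≤ ((n : ℝ) / m + δ) * L := by
      have hbase : a * (L + 1) ≤ ((n : ℝ) / m + δ) * L * b := by
        nlinarith [mul_le_mul_of_nonneg_right hkey hLnonneg, hκL]
      rw [hsdef, ← mul_div_assoc, div_le_iff₀ hbpos]
      linarith
    have hmem : tfun m n s ∈ {t ∈ centralRay m n |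
        ¬ inKmax (Real.exp (-(γ * height m n t))) (latticeOf (gMat m n t * uMat Y))} := by
      refine ⟨tfun_mem_centralRay hspos, ?_⟩
      rw [height_tfun hm s]
      refine (not_inKmax_iff hm hn Y hγpos hspos).mpr ⟨q, p, hqne, ?_, ?_⟩
      · refine lt_of_lt_of_le hp ?_
        rw [Real.rpow_def_of_pos hqpos, ← hLdef, Real.exp_le_exp]
        have h7 : -(γ * s) - s / m = -(a * s) := by rw [hadef]; ring
        rw [h7]
        have h8 : L * (-((n : ℝ) / m) - δ) = -(((n : ℝ) / m + δ) * L) := by ring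
        rw [h8]
        exact neg_le_neg has
      · rw [← hL, Real.exp_lt_exp]
        have hid : -(γ * s) + s / n = b * s := by rw [hbdef]; ring
        rw [hid, hbs]
        linarith
    have hle := hC _ hmem
    have hlow : s / m ≤ ‖tfun m n s‖ := le_norm_tfun hm
    have hsR : (m : ℝ) * R < s := by
      rw [hsdef, lt_div_iff₀ hbpos]
      nlinarith [hLR]
    have hRs : R < s / m := by
      rw [lt_div_iff₀ hmpos]
      nlinarith [hsR]
    have hCR : C ≤ R := by rw [hRdef]; exact le_max_left _ _
    linarith
  · rintro ⟨γ₀, hγ₀, hUB⟩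
    obtain ⟨γ, hγdef⟩ : ∃ γ : ℝ, γ = min γ₀ (1 / (2 * (n : ℝ))) := ⟨_, rfl⟩
    have hγpos : 0 < γ := by rw [hγdef]; exact lt_min hγ₀ (by positivity)
    have hγle : γ ≤ 1 / (2 * (n : ℝ)) := by rw [hγdef]; exact min_le_right _ _
    have hγγ₀ : γ ≤ γ₀ := by rw [hγdef]; exact min_le_left _ _
    obtain ⟨b, hbdef⟩ : ∃ b : ℝ, b = 1 / n - γ := ⟨_, rfl⟩
    obtain ⟨a, hadef⟩ : ∃ a : ℝ, a = 1 / m + γ := ⟨_, rfl⟩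
    have hbpos : 0 < b := by
      have h0 : (0 : ℝ) < 1 / (2 * (n : ℝ)) := by positivity
      rw [hbdef]; linarith
    have hapos : 0 < a := by
      have h0 : (0 : ℝ) < 1 / m := by positivity
      rw [hadef]; linarith
    obtain ⟨δ, hδdef⟩ : ∃ δ : ℝ, δ = a / b - n / m := ⟨_, rfl⟩
    have hδpos : 0 < δ := by
      rw [hδdef, sub_pos, lt_div_iff₀ hbpos, hadef, hbdef]
      nlinarith [hmn, mul_pos (div_pos hnpos hmpos) hγpos]
    have hUB' : ¬ Bornology.IsBounded {t ∈ centralRay m n |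
        ¬ inKmax (Real.exp (-(γ * height m n t))) (latticeOf (gMat m n t * uMat Y))} := by
      intro hB
      apply hUB
      apply hB.subset
      rintro t ⟨htc, htk⟩
      refine ⟨htc, ?_⟩
      obtain ⟨s, hs, rfl⟩ := htc
      have htk' : ¬ inKmax (Real.exp (-(γ₀ * height m n (tfun m n s))))
          (latticeOf (gMat m n (tfun m n s) * uMat Y)) := htk
      rw [height_tfun hm s] at htk'
      show ¬ inKmax (Real.exp (-(γ * height m n (tfun m n s))))
          (latticeOf (gMat m n (tfun m n s) * uMat Y))
      rw [height_tfun hm s]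
      intro h2
      apply htk'
      intro v hv hv0
      have h3 := h2 v hv hv0
      have hh : -(γ₀ * s) ≤ -(γ * s) := by
        nlinarith [mul_le_mul_of_nonneg_right hγγ₀ hs.le]
      exact le_trans (Real.exp_le_exp.mpr hh) h3
    refine ⟨δ, hδpos, ?_⟩
    by_cases hInt : ∃ (q₀ : Fin n → ℤ) (p₀ : Fin m → ℤ), q₀ ≠ 0 ∧
        Y.mulVec (intCast q₀) = intCast p₀
    · obtain ⟨q₀, p₀, hq₀, hYint⟩ := hInt
      obtain ⟨j, hj⟩ : ∃ j, q₀ j ≠ 0 := by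
        by_contra h
        push_neg at h
        exact hq₀ (funext h)
      refine Set.infinite_of_injective_forall_mem
        (f := fun k : ℕ => fun j' => ((k : ℤ) + 1) * q₀ j') ?_ ?_
      · intro k l hkl
        have h1 := congrFun hkl j
        simp only at h1
        have h2 : (k : ℤ) + 1 = (l : ℤ) + 1 := mul_right_cancel₀ hj h1
        exact_mod_cast add_right_cancel h2
      · intro k
        have hcq : intCast (fun j' => ((k : ℤ) + 1) * q₀ j')
            = ((k : ℝ) + 1) • intCast q₀ := by
          funext j'
          show ((((k : ℤ) + 1) * q₀ j' : ℤ) : ℝ) = ((k : ℝ) + 1) * (q₀ j' : ℝ)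
          push_cast
          ring
        have hcp : intCast (fun i => ((k : ℤ) + 1) * p₀ i)
            = ((k : ℝ) + 1) • intCast p₀ := by
          funext i
          show ((((k : ℤ) + 1) * p₀ i : ℤ) : ℝ) = ((k : ℝ) + 1) * (p₀ i : ℝ)
          push_cast
          ring
        refine ⟨fun i => ((k : ℤ) + 1) * p₀ i, ?_⟩
        have hzero : Y.mulVec (intCast fun j' => ((k : ℤ) + 1) * q₀ j')
            - intCast (fun i => ((k : ℤ) + 1) * p₀ i) = 0 := by
          rw [hcq, hcp, Matrix.mulVec_smul, hYint, sub_self]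
        rw [hzero, norm_zero]
        apply Real.rpow_pos_of_pos
        have hne : (fun j' => ((k : ℤ) + 1) * q₀ j') ≠ 0 := by
          intro h0
          have h1 := congrFun h0 j
          simp only [Pi.zero_apply, mul_eq_zero] at h1
          rcases h1 with h | h
          · omega
          · exact hj h
        linarith [one_le_norm_intCast hne]
    · push_neg at hInt
      by_contra hinf
      rw [Set.not_infinite] at hinf
      obtain ⟨M, hMb⟩ : ∃ M, ∀ q ∈ {q : Fin n → ℤ | ∃ p : Fin m → ℤ,
          ‖Y.mulVec (intCast q) - intCast p‖ < ‖intCast q‖ ^ (-(n / m : ℝ) - δ)},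
          ‖Y.mulVec (intCast q)‖ ≤ M := by
        obtain ⟨M, hM⟩ := ((hinf.image (fun q => ‖Y.mulVec (intCast q)‖)).bddAbove)
        exact ⟨M, fun q hq => hM (Set.mem_image_of_mem _ hq)⟩
      have hT : {qp : (Fin n → ℤ) × (Fin m → ℤ) | (∃ p : Fin m → ℤ,
          ‖Y.mulVec (intCast qp.1) - intCast p‖ < ‖intCast qp.1‖ ^ (-(n / m : ℝ) - δ)) ∧
          ‖intCast qp.2‖ ≤ M + 1}.Finite := by
        apply Set.Finite.subset (hinf.prod (finite_le_norm (M + 1)))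
        rintro ⟨q, p⟩ ⟨h1, h2⟩
        exact ⟨h1, h2⟩
      obtain ⟨C₀, hC₀⟩ : ∃ C₀, ∀ qp ∈ {qp : (Fin n → ℤ) × (Fin m → ℤ) | (∃ p : Fin m → ℤ,
          ‖Y.mulVec (intCast qp.1) - intCast p‖ < ‖intCast qp.1‖ ^ (-(n / m : ℝ) - δ)) ∧
          ‖intCast qp.2‖ ≤ M + 1},
          -Real.log ‖Y.mulVec (intCast qp.1) - intCast qp.2‖ / a ≤ C₀ := by
        obtain ⟨C₀, hC₀⟩ := ((hT.image
          (fun qp => -Real.log ‖Y.mulVec (intCast qp.1) - intCast qp.2‖ / a)).bddAbove)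
        exact ⟨C₀, fun qp hqp => hC₀ (Set.mem_image_of_mem _ hqp)⟩
      obtain ⟨t, htmem, htnorm⟩ := exists_norm_gt_of_not_isBounded hUB' (max C₀ 0)
      obtain ⟨⟨s, hspos, rfl⟩, hbad⟩ := htmem
      have hbad' : ¬ inKmax (Real.exp (-(γ * height m n (tfun m n s))))
          (latticeOf (gMat m n (tfun m n s) * uMat Y)) := hbad
      rw [height_tfun hm s] at hbad'
      have htnorm' : max C₀ 0 < ‖tfun m n s‖ := htnorm
      obtain ⟨q, p, hqne, h1, h2⟩ := (not_inKmax_iff hm hn Y hγpos hspos).mp hbad'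
      have hq1 : 1 ≤ ‖intCast q‖ := one_le_norm_intCast hqne
      have hqpos : 0 < ‖intCast q‖ := by linarith
      obtain ⟨L, hLdef⟩ : ∃ L : ℝ, L = Real.log ‖intCast q‖ := ⟨_, rfl⟩
      have hLnonneg : 0 ≤ L := by rw [hLdef]; exact Real.log_nonneg hq1
      have hLbs : L < b * s := by
        have h := Real.log_lt_log hqpos h2
        rw [Real.log_exp] at h
        have hid : -(γ * s) + s / n = b * s := by rw [hbdef]; ring
        rw [hid] at h
        rw [hLdef]
        exact h
      have haid : -(γ * s) - s / m = -(a * s) := by rw [hadef]; ring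
      rw [haid] at h1
      have hqS : q ∈ {q : Fin n → ℤ | ∃ p : Fin m → ℤ,
          ‖Y.mulVec (intCast q) - intCast p‖ < ‖intCast q‖ ^ (-(n / m : ℝ) - δ)} := by
        refine ⟨p, lt_of_lt_of_le h1 ?_⟩
        rw [Real.rpow_def_of_pos hqpos, ← hLdef, Real.exp_le_exp]
        have hexp : -(n / m : ℝ) - δ = -(a / b) := by rw [hδdef]; ring
        rw [hexp]
        have hab : (0 : ℝ) ≤ a / b := le_of_lt (div_pos hapos hbpos)
        have h3 : (a / b) * L ≤ (a / b) * (b * s) := mul_le_mul_of_nonneg_left hLbs.le hab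
        have h4 : (a / b) * (b * s) = a * s := by
          rw [← mul_assoc, div_mul_cancel₀ _ hbpos.ne']
        nlinarith
      have hpnorm : ‖intCast p‖ ≤ M + 1 := by
        have hYqplt1 : ‖Y.mulVec (intCast q) - intCast p‖ ≤ 1 := by
          refine le_of_lt (lt_of_lt_of_le h1 ?_)
          rw [Real.exp_le_one_iff]
          nlinarith [hapos, hspos]
        have hid : intCast p = Y.mulVec (intCast q)
            - (Y.mulVec (intCast q) - intCast p) := by abel
        rw [hid]
        refine le_trans (norm_sub_le _ _) ?_
        have := hMb q hqS
        linarith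
      have hne : Y.mulVec (intCast q) - intCast p ≠ 0 := by
        intro h0
        exact hInt q p hqne (by rwa [sub_eq_zero] at h0)
      have hpos : 0 < ‖Y.mulVec (intCast q) - intCast p‖ := norm_pos_iff.mpr hne
      have hslt : s < -Real.log ‖Y.mulVec (intCast q) - intCast p‖ / a := by
        have hlog : Real.log ‖Y.mulVec (intCast q) - intCast p‖ < -(a * s) := by
          have h := Real.log_lt_log hpos h1
          rwa [Real.log_exp] at h
        rw [lt_div_iff₀ hapos]
        nlinarith
      have hbound := hC₀ (q, p) ⟨hqS, hpnorm⟩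
      have hsnorm : ‖tfun m n s‖ ≤ s := norm_tfun_le hm hn hspos.le
      have h6 : max C₀ 0 < s := lt_of_lt_of_le htnorm' hsnorm
      have h5 : C₀ ≤ max C₀ 0 := le_max_left _ _
      linarith


end Paper
end
end

section
/- Suppose z_1, …, z_m ≥ 0, r ≥ 0 and C > 1 are such that z_i < r for each i = 1, …, m and ∏_{i=1}^m z_i < r^m / C. Then there exist C_1, …, C_m ≥ 1 such that C = ∏_{i=1}^m C_i and C_i z_i ≤ r for each i = 1, …, m. -/
open MeasureTheory Metric Set

noncomputable section

namespace Paper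

theorem aux_split (m : ℕ) : ∀ (b : Fin m → ℝ) (C : ℝ), 1 ≤ C → (∀ i, 1 ≤ b i) →
    C ≤ ∏ i, b i → ∃ Cs : Fin m → ℝ, (∀ i, 1 ≤ Cs i) ∧ C = ∏ i, Cs i ∧ ∀ i, Cs i ≤ b i := by
  induction m with
  | zero =>
    intro b C hC hb h
    refine ⟨fun _ => 1, fun i => le_refl _, ?_, fun i => i.elim0⟩
    simpa using le_antisymm (by simpa using h) hC
  | succ m ih =>
    intro b C hC hb h
    set C₀ : ℝ := min (b 0) C with hC₀def
    have hb0 : (1:ℝ) ≤ b 0 := hb 0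
    have hC₀1 : 1 ≤ C₀ := le_min hb0 hC
    have hC₀pos : 0 < C₀ := lt_of_lt_of_le one_pos hC₀1
    have htail1 : (1:ℝ) ≤ ∏ i : Fin m, b i.succ := by
      have := Finset.prod_le_prod (s := Finset.univ) (f := fun _ : Fin m => (1:ℝ))
        (g := fun i => b i.succ) (fun i _ => zero_le_one) (fun i _ => hb i.succ)
      simpa using this
    have hprod : ∏ i, b i = b 0 * ∏ i : Fin m, b i.succ := Fin.prod_univ_succ b
    have hC' : C / C₀ ≤ ∏ i : Fin m, b i.succ := by
      rcases le_total (b 0) C with hle | hle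
      · have : C₀ = b 0 := min_eq_left hle
        rw [this, div_le_iff₀ (lt_of_lt_of_le one_pos hb0)]
        rw [hprod] at h
        linarith [h, mul_comm (b 0) (∏ i : Fin m, b i.succ)]
      · have : C₀ = C := min_eq_right hle
        rw [this, div_self (ne_of_gt (lt_of_lt_of_le one_pos hC))]
        exact htail1
    have hC'1 : 1 ≤ C / C₀ := by
      rw [le_div_iff₀ hC₀pos]
      simpa only [one_mul] using min_le_right (b 0) C
    obtain ⟨Cs', h1, h2, h3⟩ := ih (fun i => b i.succ) (C / C₀) hC'1 (fun i => hb i.succ) hC'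
    refine ⟨Fin.cons C₀ Cs', ?_, ?_, ?_⟩
    · intro i
      refine Fin.cases ?_ ?_ i
      · exact hC₀1
      · intro j; simpa using h1 j
    · rw [Fin.prod_univ_succ]
      simp only [Fin.cons_zero, Fin.cons_succ]
      rw [← h2]
      field_simp
    · intro i
      refine Fin.cases ?_ ?_ i
      · simpa only [Fin.cons_zero] using min_le_left (b 0) C
      · intro j; simpa using h3 j

/-- the elementary real-number lemma. -/
theorem statement6 (m : ℕ) (z : Fin m → ℝ) (r C : ℝ)
    (hz : ∀ i, 0 ≤ z i) (hr : 0 ≤ r) (hC : 1 < C)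
    (h1 : ∀ i, z i < r) (h2 : ∏ i, z i < r ^ m / C) :
    ∃ Cs : Fin m → ℝ, (∀ i, 1 ≤ Cs i) ∧ C = ∏ i, Cs i ∧ ∀ i, Cs i * z i ≤ r := by
  have hCpos : (0:ℝ) < C := lt_trans one_pos hC
  rcases Nat.eq_zero_or_pos m with hm | hm
  · exfalso
    subst hm
    simp only [Finset.univ_eq_empty, Finset.prod_empty, pow_zero] at h2
    have : 1 / C < 1 := by rw [div_lt_one hCpos]; exact hC
    linarith
  -- m ≥ 1, so r > 0
  have hrpos : 0 < r := lt_of_le_of_lt (hz ⟨0, hm⟩) (h1 ⟨0, hm⟩)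
  by_cases hzero : ∃ i, z i = 0
  · obtain ⟨i₀, hi₀⟩ := hzero
    classical
    refine ⟨fun j => if j = i₀ then C else 1, ?_, ?_, ?_⟩
    · intro j; by_cases hj : j = i₀ <;> simp [hj, le_of_lt hC]
    · rw [Finset.prod_ite_eq' Finset.univ i₀ (fun _ => C)]
      simp
    · intro j
      by_cases hj : j = i₀
      · simp [hj, hi₀, le_of_lt hrpos]
      · simp only [hj, if_false, one_mul]
        exact le_of_lt (h1 j)
  · push_neg at hzero
    have hzpos : ∀ i, 0 < z i := fun i => lt_of_le_of_ne (hz i) (Ne.symm (hzero i))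
    have hb1 : ∀ i, 1 ≤ r / z i := fun i => by
      rw [le_div_iff₀ (hzpos i)]; simpa using le_of_lt (h1 i)
    have hprodz : 0 < ∏ i, z i := Finset.prod_pos (fun i _ => hzpos i)
    have hble : C ≤ ∏ i, r / z i := by
      rw [Finset.prod_div_distrib, Finset.prod_const, Finset.card_univ, Fintype.card_fin]
      rw [le_div_iff₀ hprodz]
      have h3 : (∏ i, z i) * C < r ^ m := (lt_div_iff₀ hCpos).mp h2
      nlinarith [h3]
    obtain ⟨Cs, h1', h2', h3'⟩ := aux_split m (fun i => r / z i) C (le_of_lt hC) hb1 hble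
    refine ⟨Cs, h1', h2', fun i => ?_⟩
    have := h3' i
    calc Cs i * z i ≤ (r / z i) * z i :=
          mul_le_mul_of_nonneg_right this (hz i)
      _ = r := div_mul_cancel₀ r (hzero i)

end Paper
end
end
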